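/- Define r : ℝ → ℝ by r(u) = (e^u - u - 1)/u^2 for u ≠ 0 and r(0) = 1/2. Then r is nondecreasing on ℝ. -/

import Mathlib

/-- Integral representation of the Bennett ratio. -/
lemma bennett_integral_rep (u : ℝ) :
    (∫ t in (0:ℝ)..1, (1 - t) * Real.exp (u * t)) =
      if u = 0 then 1/2 else (Real.exp u - u - 1) / u ^ 2 := by
  by_cases hu : u = 0
  · subst hu
    simp only [if_true, zero_mul, Real.exp_zero, mul_one]
    have : (∫ t in (0:ℝ)..1, (1 - t)) = 1/2 := by
      simp [intervalIntegral.integral_sub intervalIntegrable_const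
        (intervalIntegral.intervalIntegrable_id)]
      norm_num
    simpa using this
  · rw [if_neg hu]
    have key : ∀ t ∈ Set.uIcc (0:ℝ) 1,
        HasDerivAt (fun t => (1 - t) * Real.exp (u * t) / u + Real.exp (u * t) / u ^ 2)
          ((1 - t) * Real.exp (u * t)) t := by
      intro t _
      have h1 : HasDerivAt (fun t : ℝ => Real.exp (u * t)) (u * Real.exp (u * t)) t := by
        have := (Real.hasDerivAt_exp (u * t)).comp t ((hasDerivAt_id t).const_mul u)
        simpa [mul_comm, Function.comp_def] using this
      have h2 : HasDerivAt (fun t : ℝ => (1 - t)) (-1) t := by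
        simpa using (hasDerivAt_id t).const_sub (1:ℝ)
      have h3 : HasDerivAt (fun t : ℝ => (1 - t) * Real.exp (u * t))
          ((-1) * Real.exp (u * t) + (1 - t) * (u * Real.exp (u * t))) t := h2.mul h1
      have h4 : HasDerivAt (fun t => (1 - t) * Real.exp (u * t) / u + Real.exp (u * t) / u ^ 2) _ t :=
        (h3.div_const u).add (h1.div_const (u ^ 2))
      convert h4 using 1
      field_simp
      ring
    have cont : ContinuousOn (fun t => (1 - t) * Real.exp (u * t)) (Set.uIcc (0:ℝ) 1) :=
      (Continuous.mul (by continuity) (by continuity)).continuousOn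
    have := intervalIntegral.integral_eq_sub_of_hasDerivAt key
      (cont.intervalIntegrable)
    rw [this]
    field_simp
    simp only [mul_zero, Real.exp_zero]
    ring

/-- The Bennett ratio `r(u) = (e^u - u - 1)/u^2` (with `r(0) = 1/2`) is
nondecreasing on `ℝ`. -/
theorem bennett_ratio_monotone (r : ℝ → ℝ)
    (hr0 : r 0 = 1 / 2)
    (hr : ∀ u : ℝ, u ≠ 0 → r u = (Real.exp u - u - 1) / u ^ 2) :
    Monotone r := by
  have rep : ∀ u : ℝ, r u = ∫ t in (0:ℝ)..1, (1 - t) * Real.exp (u * t) := by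
    intro u
    rw [bennett_integral_rep]
    by_cases hu : u = 0
    · simp [hu, hr0]
    · simp [hu, hr u hu]
  intro a b hab
  rw [rep a, rep b]
  apply intervalIntegral.integral_mono_on (by norm_num)
  · exact (Continuous.mul (by continuity) (by continuity)).intervalIntegrable _ _
  · exact (Continuous.mul (by continuity) (by continuity)).intervalIntegrable _ _
  · intro t ht
    rcases ht with ⟨ht0, ht1⟩
    have h1 : (0:ℝ) ≤ 1 - t := by linarith
    exact mul_le_mul_of_nonneg_left
      (Real.exp_le_exp.mpr (mul_le_mul_of_nonneg_right hab ht0)) h1
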